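/- Let p ∈ (1, ∞) and, for a ≥ 0, define φ_a : [0, ∞) → [0, ∞) by φ_a(t) = ∫_0^t (a + s)^{p−2} s ds, so that φ_a'(t) = (a + t)^{p−2} t. For every real δ > 0 there exists a constant c(δ) > 0, depending only on p and δ, such that for every integer n ≥ 1 and all x, y, z ∈ ℝ^n: φ_{|x|}'(|x − z|) · |x − y| ≤ δ φ_{|x|}(|x − y|) + c(δ) φ_{|x|}(|x − z|). -/

import Mathlib

/-- The shifted N-function `φ_a(t) = ∫₀ᵗ (a + s)^{p-2} s ds`. -/
noncomputable def phiShift (p a t : ℝ) : ℝ :=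
  ∫ s in (0:ℝ)..t, (a + s) ^ (p - 2) * s

open MeasureTheory intervalIntegral Real Set

lemma phi_integrable (p : ℝ) (hp : 1 < p) {a t : ℝ} (ha : 0 ≤ a) (ht : 0 ≤ t) :
    IntervalIntegrable (fun s => (a + s) ^ (p - 2) * s) volume 0 t := by
  rcases eq_or_lt_of_le ha with rfl | ha'
  · have h1 : IntervalIntegrable (fun s : ℝ => s ^ (p - 1)) volume 0 t :=
      intervalIntegral.intervalIntegrable_rpow' (by linarith)
    refine h1.congr ?_
    intro s hs
    rw [uIoc_of_le ht] at hs
    have hs0 : 0 < s := hs.1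
    simp only [zero_add]
    rw [← Real.rpow_add_one (ne_of_gt hs0)]
    ring_nf
  · apply ContinuousOn.intervalIntegrable
    apply ContinuousOn.mul ?_ continuousOn_id
    apply ContinuousOn.rpow_const (by fun_prop)
    intro s hs
    rw [uIcc_of_le ht] at hs
    left
    have : 0 ≤ s := hs.1
    linarith

lemma phi_lower (p : ℝ) (hp : 1 < p) {a t : ℝ} (ha : 0 ≤ a) (ht : 0 ≤ t) :
    (a + t) ^ (p - 2) * t ^ 2 / max 2 p ≤ phiShift p a t := by
  have hmax : (0:ℝ) < max 2 p := lt_max_of_lt_left two_pos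
  rcases eq_or_lt_of_le ht with rfl | ht0
  · simp [phiShift]
  rcases le_or_gt p 2 with hp2 | hp2
  · -- max = 2
    have hm : max 2 p = 2 := max_eq_left hp2
    have hint : IntervalIntegrable (fun s => (a + s) ^ (p - 2) * s) volume 0 t :=
      phi_integrable p hp ha ht
    have hg : IntervalIntegrable (fun s : ℝ => (a + t) ^ (p - 2) * s) volume 0 t :=
      (intervalIntegral.intervalIntegrable_id).const_mul _
    have hmono : ∀ s ∈ Icc (0:ℝ) t, (a + t) ^ (p - 2) * s ≤ (a + s) ^ (p - 2) * s := by
      intro s hs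
      rcases eq_or_lt_of_le hs.1 with rfl | hs0
      · simp
      · have : (a + t) ^ (p - 2) ≤ (a + s) ^ (p - 2) :=
          Real.rpow_le_rpow_of_nonpos (by linarith) (by linarith [hs.2]) (by linarith)
        exact mul_le_mul_of_nonneg_right this hs0.le
    have := intervalIntegral.integral_mono_on ht hg hint hmono
    rw [intervalIntegral.integral_const_mul, integral_id] at this
    rw [hm]
    calc (a + t) ^ (p - 2) * t ^ 2 / 2 = (a + t) ^ (p - 2) * ((t ^ 2 - 0 ^ 2) / 2) := by ring
      _ ≤ phiShift p a t := this
  · -- max = p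
    have hm : max 2 p = p := max_eq_right hp2.le
    have hat : 0 < a + t := by linarith
    have hint : IntervalIntegrable (fun s => (a + s) ^ (p - 2) * s) volume 0 t :=
      phi_integrable p hp ha ht
    set C := (a + t) ^ (p - 2) * t ^ (2 - p) with hC
    have hC0 : 0 ≤ C := mul_nonneg (Real.rpow_nonneg hat.le _) (Real.rpow_nonneg ht _)
    have hg : IntervalIntegrable (fun s : ℝ => C * s ^ (p - 1)) volume 0 t :=
      (intervalIntegral.intervalIntegrable_rpow' (by linarith)).const_mul _
    have hmono : ∀ s ∈ Icc (0:ℝ) t, C * s ^ (p - 1) ≤ (a + s) ^ (p - 2) * s := by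
      intro s hs
      rcases eq_or_lt_of_le hs.1 with rfl | hs0
      · rw [Real.zero_rpow (by linarith)]
        simp
      · have hbase : (a + t) * (s / t) ≤ a + s := by
          have he : (a + t) * (s / t) = ((a + t) * s) / t := by ring
          rw [he, div_le_iff₀ ht0]
          nlinarith [hs.2]
        have h1 : ((a + t) * (s / t)) ^ (p - 2) ≤ (a + s) ^ (p - 2) :=
          Real.rpow_le_rpow (by positivity) hbase (by linarith)
        have h2 : ((a + t) * (s / t)) ^ (p - 2)
            = (a + t) ^ (p - 2) * (s ^ (p - 2) / t ^ (p - 2)) := by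
          rw [Real.mul_rpow hat.le (by positivity), Real.div_rpow hs0.le ht]
        have h3 : C * s ^ (p - 1) = ((a + t) ^ (p - 2) * (s ^ (p - 2) / t ^ (p - 2))) * s := by
          rw [hC]
          rw [show (2:ℝ) - p = -(p-2) by ring, Real.rpow_neg ht]
          rw [show p - 1 = (p - 2) + 1 by ring, Real.rpow_add_one (ne_of_gt hs0)]
          field_simp
        rw [h3, ← h2]
        exact mul_le_mul_of_nonneg_right h1 hs0.le
    have := intervalIntegral.integral_mono_on ht hg hint hmono
    rw [intervalIntegral.integral_const_mul, integral_rpow (Or.inl (by linarith))] at this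
    rw [hm]
    refine le_trans (le_of_eq ?_) this
    rw [hC, Real.zero_rpow (by linarith)]
    rw [show p - 1 + 1 = p by ring]
    rw [show (t:ℝ) ^ 2 = t ^ (2:ℝ) by rw [Real.rpow_two]]
    rw [show t ^ (2:ℝ) = t ^ (2 - p) * t ^ p by rw [← Real.rpow_add ht0]; ring_nf]
    field_simp
    ring

lemma g_mono (p : ℝ) (hp1 : 1 < p) (hp2 : p ≤ 2) {a t T : ℝ} (ha : 0 ≤ a)
    (ht : 0 ≤ t) (hT : t ≤ T) :
    (a + t) ^ (p - 2) * t ≤ (a + T) ^ (p - 2) * T := by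
  rcases eq_or_lt_of_le ht with rfl | ht0
  · simpa using mul_nonneg (Real.rpow_nonneg (by linarith) _) (by linarith)
  have hT0 : 0 < T := lt_of_lt_of_le ht0 hT
  have hat : 0 < a + t := by linarith
  have haT : 0 < a + T := by linarith
  set q := 2 - p with hq
  have hq0 : 0 ≤ q := by simp [hq]; linarith
  have h1 : 0 < (a + t) ^ q := Real.rpow_pos_of_pos hat _
  have h2 : 0 < (a + T) ^ q := Real.rpow_pos_of_pos haT _
  have key : t * (a + T) ^ q ≤ T * (a + t) ^ q := by
    have e1 : (t * (a + T)) ^ q ≤ (T * (a + t)) ^ q := by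
      apply Real.rpow_le_rpow (by positivity) (by nlinarith) hq0
    rw [Real.mul_rpow ht0.le haT.le, Real.mul_rpow hT0.le hat.le] at e1
    have f1 : t * (a + T) ^ q = t ^ (1 - q) * (t ^ q * (a + T) ^ q) := by
      rw [← mul_assoc, ← Real.rpow_add ht0, sub_add_cancel, Real.rpow_one]
    have f2 : T * (a + t) ^ q = T ^ (1 - q) * (T ^ q * (a + t) ^ q) := by
      rw [← mul_assoc, ← Real.rpow_add hT0, sub_add_cancel, Real.rpow_one]
    rw [f1, f2]
    have g1 : t ^ (1 - q) ≤ T ^ (1 - q) :=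
      Real.rpow_le_rpow ht0.le hT (by simp [hq]; linarith)
    have g2 : 0 ≤ t ^ q * (a + T) ^ q := by positivity
    calc t ^ (1 - q) * (t ^ q * (a + T) ^ q)
        ≤ t ^ (1 - q) * (T ^ q * (a + t) ^ q) :=
          mul_le_mul_of_nonneg_left e1 (by positivity)
      _ ≤ T ^ (1 - q) * (T ^ q * (a + t) ^ q) :=
          mul_le_mul_of_nonneg_right g1 (by positivity)
  have hrw : p - 2 = -q := by simp [hq]
  rw [hrw, Real.rpow_neg hat.le, Real.rpow_neg haT.le, inv_mul_eq_div, inv_mul_eq_div,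
    div_le_div_iff₀ h1 h2]
  linarith [key]


/-- `φ_{|x|}'(|x-z|) |x-y| ≤ δ φ_{|x|}(|x-y|) + c(δ) φ_{|x|}(|x-z|)`,
where `φ_a'(t) = (a + t)^{p-2} t`. -/
theorem shifted_N_function_key_bound (p : ℝ) (hp1 : 1 < p) (δ : ℝ) (hδ : 0 < δ) :
    ∃ c : ℝ, 0 < c ∧
      ∀ n : ℕ, 1 ≤ n →
        ∀ x y z : EuclideanSpace ℝ (Fin n),
          (‖x‖ + ‖x - z‖) ^ (p - 2) * ‖x - z‖ * ‖x - y‖ ≤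
            δ * phiShift p ‖x‖ ‖x - y‖ + c * phiShift p ‖x‖ ‖x - z‖ := by
  have hK : (0:ℝ) < max 2 p := lt_max_of_lt_left two_pos
  set K := max 2 p with hKdef
  have hp1' : (0:ℝ) < p - 1 := by linarith
  obtain ⟨B, hB0, hBK⟩ : ∃ B : ℝ, 1 < B ∧ K / δ ≤ B := ⟨K / δ + 1, by have := div_pos hK hδ; linarith, by linarith⟩
  obtain ⟨Λ, hΛ1, hΛB, hΛp⟩ : ∃ Λ : ℝ, 1 < Λ ∧ B ≤ Λ ∧ B ≤ Λ ^ (p - 1) := by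
    refine ⟨max B (B ^ (1 / (p - 1))), lt_of_lt_of_le hB0 (le_max_left _ _),
      le_max_left _ _, ?_⟩
    calc B = (B ^ (1 / (p - 1))) ^ (p - 1) := by
          rw [← Real.rpow_mul (by linarith), one_div,
            inv_mul_cancel₀ (ne_of_gt hp1'), Real.rpow_one]
      _ ≤ (max B (B ^ (1 / (p - 1)))) ^ (p - 1) :=
          Real.rpow_le_rpow (Real.rpow_nonneg (by linarith) _) (le_max_right _ _)
            (by linarith)
  have hΛ0 : 0 < Λ := by linarith
  refine ⟨Λ * K, by positivity, ?_⟩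
  intro n hn x y z
  set a := ‖x‖ with hadef
  set t := ‖x - z‖ with htdef
  set u := ‖x - y‖ with hudef
  have ha : 0 ≤ a := norm_nonneg _
  have ht : 0 ≤ t := norm_nonneg _
  have hu : 0 ≤ u := norm_nonneg _
  have hφt : (a + t) ^ (p - 2) * t ^ 2 / K ≤ phiShift p a t := phi_lower p hp1 ha ht
  have hφu : (a + u) ^ (p - 2) * u ^ 2 / K ≤ phiShift p a u := phi_lower p hp1 ha hu
  have hφt0 : 0 ≤ phiShift p a t := le_trans (by positivity) hφt
  have hφu0 : 0 ≤ phiShift p a u := le_trans (by positivity) hφu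
  have hrt : 0 ≤ (a + t) ^ (p - 2) := Real.rpow_nonneg (by linarith) _
  have hru : 0 ≤ (a + u) ^ (p - 2) := Real.rpow_nonneg (by linarith) _
  rcases le_or_gt u (Λ * t) with hc | hc
  · have h1 : (a + t) ^ (p - 2) * t * u ≤ Λ * K * ((a + t) ^ (p - 2) * t ^ 2 / K) := by
      calc (a + t) ^ (p - 2) * t * u ≤ (a + t) ^ (p - 2) * t * (Λ * t) :=
            mul_le_mul_of_nonneg_left hc (by positivity)
        _ = Λ * K * ((a + t) ^ (p - 2) * t ^ 2 / K) := by field_simp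
    have h2 : Λ * K * ((a + t) ^ (p - 2) * t ^ 2 / K) ≤ Λ * K * phiShift p a t :=
      mul_le_mul_of_nonneg_left hφt (by positivity)
    have h3 : 0 ≤ δ * phiShift p a u := mul_nonneg hδ.le hφu0
    linarith
  · have hu0 : 0 < u := lt_of_le_of_lt (by positivity) hc
    have htu : t ≤ u / Λ := by
      rw [le_div_iff₀ hΛ0]
      nlinarith
    have hδΛ : K ≤ δ * Λ := by
      have e1 : δ * (K / δ) ≤ δ * B := mul_le_mul_of_nonneg_left hBK hδ.le
      have e2 : δ * B ≤ δ * Λ := mul_le_mul_of_nonneg_left hΛB hδ.le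
      have e3 : δ * (K / δ) = K := by field_simp
      linarith
    have key : (a + t) ^ (p - 2) * t ≤ δ / K * ((a + u) ^ (p - 2) * u) := by
      rcases le_or_gt p 2 with hp2 | hp2
      · have hmono : (a + t) ^ (p - 2) * t ≤ (a + u / Λ) ^ (p - 2) * (u / Λ) :=
          g_mono p hp1 hp2 ha ht htu
        have hscale : (a + u / Λ) ^ (p - 2) ≤ Λ ^ (2 - p) * (a + u) ^ (p - 2) := by
          have hb : (a + u) / Λ ≤ a + u / Λ := by
            rw [add_div]
            have : a / Λ ≤ a := div_le_self ha hΛ1.le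
            linarith
          calc (a + u / Λ) ^ (p - 2) ≤ ((a + u) / Λ) ^ (p - 2) :=
                Real.rpow_le_rpow_of_nonpos (by positivity) hb (by linarith)
            _ = Λ ^ (2 - p) * (a + u) ^ (p - 2) := by
                rw [Real.div_rpow (by linarith) hΛ0.le,
                  show (2:ℝ) - p = -(p - 2) by ring, Real.rpow_neg hΛ0.le]
                field_simp
        have hΛ1p : Λ ^ (2 - p) / Λ ≤ δ / K := by
          have e1 : Λ ^ (2 - p) / Λ = (Λ ^ (p - 1))⁻¹ := by
            rw [div_eq_mul_inv, ← Real.rpow_neg_one Λ, ← Real.rpow_add hΛ0,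
              show (2:ℝ) - p + -1 = -(p - 1) by ring, Real.rpow_neg hΛ0.le]
          have e2 : K / δ ≤ Λ ^ (p - 1) := le_trans hBK hΛp
          have e3 : 0 < K / δ := by positivity
          have e4 : (Λ ^ (p - 1))⁻¹ ≤ (K / δ)⁻¹ := by
            apply inv_anti₀ e3 e2
          rw [e1, inv_div] at *
          exact le_trans e4 (le_of_eq (inv_div K δ ▸ rfl))
        calc (a + t) ^ (p - 2) * t ≤ (a + u / Λ) ^ (p - 2) * (u / Λ) := hmono
          _ ≤ Λ ^ (2 - p) * (a + u) ^ (p - 2) * (u / Λ) :=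
              mul_le_mul_of_nonneg_right hscale (by positivity)
          _ = Λ ^ (2 - p) / Λ * ((a + u) ^ (p - 2) * u) := by ring
          _ ≤ δ / K * ((a + u) ^ (p - 2) * u) :=
              mul_le_mul_of_nonneg_right hΛ1p (by positivity)
      · have h1 : (a + t) ^ (p - 2) ≤ (a + u) ^ (p - 2) := by
          have htu' : t ≤ u := le_trans htu (div_le_self hu hΛ1.le)
          exact Real.rpow_le_rpow (by linarith) (by linarith) (by linarith)
        have hKδ : 1 / Λ ≤ δ / K := by
          rw [div_le_div_iff₀ hΛ0 hK]
          linarith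
        calc (a + t) ^ (p - 2) * t ≤ (a + u) ^ (p - 2) * (u / Λ) :=
              mul_le_mul h1 htu ht hru
          _ = 1 / Λ * ((a + u) ^ (p - 2) * u) := by ring
          _ ≤ δ / K * ((a + u) ^ (p - 2) * u) :=
              mul_le_mul_of_nonneg_right hKδ (by positivity)
    have h2 : (a + t) ^ (p - 2) * t * u ≤ δ * ((a + u) ^ (p - 2) * u ^ 2 / K) := by
      calc (a + t) ^ (p - 2) * t * u ≤ δ / K * ((a + u) ^ (p - 2) * u) * u :=
            mul_le_mul_of_nonneg_right key hu
        _ = δ * ((a + u) ^ (p - 2) * u ^ 2 / K) := by field_simp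
    have h3 : δ * ((a + u) ^ (p - 2) * u ^ 2 / K) ≤ δ * phiShift p a u :=
      mul_le_mul_of_nonneg_left hφu hδ.le
    have h4 : 0 ≤ Λ * K * phiShift p a t := by positivity
    linarith
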